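/- Let A ∈ ℝ^{n×M}, B ∈ ℝ^{n×m}, 𝓜 : ℝⁿ → ℝ^M, let Π : ℝⁿ → ℝⁿ be any map, let U ⊆ ℝᵐ and Û ⊆ ℝᵐ be input sets, and let ν > 0 satisfy ‖û‖ ≤ ν for all û ∈ Û. Let S : ℝⁿ × ℝⁿ → ℝ be nonnegative and suppose there exist γ ∈ (0,1), ρ ≥ 0, ψ > 0 such that for all x, x̂ ∈ ℝⁿ and all û ∈ Û there exists u ∈ U with S( A·𝓜(x) + B·u , Π(A·𝓜(x̂) + B·û) ) ≤ γ·S(x, x̂) + ρ·‖û‖ + ψ. Fix any η₁, η₂ ∈ (0,1) and η₃ ∈ (1,2), and set ρ̄ = (1 + η₂)η₃ρ/((1 − γ)η₁) and ψ̄ = (1 + η₂)η₃ψ/((1 − γ)(η₃ − 1)η₁η₂). Then the relation R = {(x, x̂) ∈ ℝⁿ × ℝⁿ : S(x, x̂) ≤ max(ρ̄ν, ψ̄)} is invariant under the matched dynamics: for every (x, x̂) ∈ R and every û ∈ Û there exists u ∈ U such that ( A·𝓜(x) + B·u , Π(A·𝓜(x̂) + B·û) ) ∈ R. (Part (ii)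 of Theorem 3.5.) -/

import Mathlib

open Matrix

/-- Part (ii) of Theorem 3.5: the relation
`R = {(x, x̂) : S(x, x̂) ≤ max(ρ̄ν, ψ̄)}` is invariant under the matched dynamics of the
dt-IANSP `x⁺ = A𝓜(x) + Bu` and its symbolic model `x̂⁺ = Π(A𝓜(x̂) + Bû)`. -/
theorem asf_relation_invariant
    (n m M : ℕ) (hn : 0 < n) (hm : 0 < m) (hM : 0 < M)
    (A : Matrix (Fin n) (Fin M) ℝ) (B : Matrix (Fin n) (Fin m) ℝ)
    (𝓜 : EuclideanSpace ℝ (Fin n) → EuclideanSpace ℝ (Fin M))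
    (Piq : EuclideanSpace ℝ (Fin n) → EuclideanSpace ℝ (Fin n))
    (U Uh : Set (EuclideanSpace ℝ (Fin m)))
    (ν : ℝ) (hν : 0 < ν) (hUh : ∀ uh ∈ Uh, ‖uh‖ ≤ ν)
    (S : EuclideanSpace ℝ (Fin n) → EuclideanSpace ℝ (Fin n) → ℝ)
    (hS0 : ∀ x xh, 0 ≤ S x xh)
    (γ ρ ψ : ℝ) (hγ : γ ∈ Set.Ioo (0 : ℝ) 1) (hρ : 0 ≤ ρ) (hψ : 0 < ψ)
    (hASF : ∀ x xh : EuclideanSpace ℝ (Fin n), ∀ uh ∈ Uh, ∃ u ∈ U,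
      S (WithLp.toLp 2 (A.mulVec (𝓜 x) + B.mulVec u)) (Piq (WithLp.toLp 2 (A.mulVec (𝓜 xh) + B.mulVec uh)))
        ≤ γ * S x xh + ρ * ‖uh‖ + ψ)
    (η₁ η₂ η₃ : ℝ) (hη₁ : η₁ ∈ Set.Ioo (0 : ℝ) 1) (hη₂ : η₂ ∈ Set.Ioo (0 : ℝ) 1)
    (hη₃ : η₃ ∈ Set.Ioo (1 : ℝ) 2)
    (ρbar ψbar : ℝ)
    (hρbar : ρbar = (1 + η₂) * η₃ * ρ / ((1 - γ) * η₁))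
    (hψbar : ψbar = (1 + η₂) * η₃ * ψ / ((1 - γ) * (η₃ - 1) * η₁ * η₂)) :
    ∀ x xh : EuclideanSpace ℝ (Fin n), S x xh ≤ max (ρbar * ν) ψbar →
      ∀ uh ∈ Uh, ∃ u ∈ U,
        S (WithLp.toLp 2 (A.mulVec (𝓜 x) + B.mulVec u)) (Piq (WithLp.toLp 2 (A.mulVec (𝓜 xh) + B.mulVec uh)))
          ≤ max (ρbar * ν) ψbar := by
  intro x xh hR uh huh
  obtain ⟨γ0, γ1⟩ := hγ
  obtain ⟨h10, h11⟩ := hη₁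
  obtain ⟨h20, h21⟩ := hη₂
  obtain ⟨h31, h32⟩ := hη₃
  have hM1 : ρbar * ν ≤ max (ρbar * ν) ψbar := le_max_left _ _
  have hM2 : ψbar ≤ max (ρbar * ν) ψbar := le_max_right _ _
  have hg : 0 < 1 - γ := by linarith
  have hd1 : 0 < (1 - γ) * η₁ := by positivity
  have hd2 : 0 < (1 - γ) * (η₃ - 1) * η₁ * η₂ := by
    have : 0 < η₃ - 1 := by linarith
    positivity
  set Mx := max (ρbar * ν) ψbar with hMx
  have h1 : (1 + η₂) * η₃ * ρ * ν ≤ Mx * ((1 - γ) * η₁) := by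
    rw [hρbar, div_mul_eq_mul_div, div_le_iff₀ hd1] at hM1
    exact hM1
  have h2 : (1 + η₂) * η₃ * ψ ≤ Mx * ((1 - γ) * (η₃ - 1) * η₁ * η₂) := by
    rw [hψbar, div_le_iff₀ hd2] at hM2
    exact hM2
  have hMx0 : 0 < Mx := by
    have : 0 < ψbar := by
      rw [hψbar]; positivity
    exact lt_of_lt_of_le this hM2
  have hkey : ρ * ν + ψ ≤ (1 - γ) * Mx := by
    have hD : 0 ≤ (1 - γ) * Mx := (mul_pos hg hMx0).le
    have hc : (0:ℝ) < (1 + η₂) * η₃ := by nlinarith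
    nlinarith [h1, h2, hc,
      mul_nonneg (mul_nonneg hD (by linarith : (0:ℝ) ≤ 1 - η₁))
        (by nlinarith : (0:ℝ) ≤ 1 + η₂ * (η₃ - 1)),
      mul_nonneg hD (by linarith : (0:ℝ) ≤ η₃ - 1 + η₂)]
  obtain ⟨u, huU, hSu⟩ := hASF x xh uh huh
  refine ⟨u, huU, ?_⟩
  have hnorm : ρ * ‖uh‖ ≤ ρ * ν := mul_le_mul_of_nonneg_left (hUh uh huh) hρ
  have hγS : γ * S x xh ≤ γ * Mx := mul_le_mul_of_nonneg_left hR γ0.le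
  calc S (WithLp.toLp 2 (A.mulVec (𝓜 x) + B.mulVec u)) (Piq (WithLp.toLp 2 (A.mulVec (𝓜 xh) + B.mulVec uh)))
      ≤ γ * S x xh + ρ * ‖uh‖ + ψ := hSu
    _ ≤ γ * Mx + (ρ * ν + ψ) := by linarith
    _ ≤ γ * Mx + (1 - γ) * Mx := by linarith
    _ = Mx := by ring
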